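/- Let X ∈ S^n with X ⪰ 0, A(X) = b and trace(X) ≤ M_b for some M_b > 0, and let y ∈ R^m be such that λ_min(C − A*y) ≤ 0, where λ_min denotes the smallest eigenvalue. Then ⟨C, X⟩ ≥ ⟨b, y⟩ + M_b · λ_min(C − A*y). In particular, ⟨b, y⟩ + M_b λ_min(C − A*y) is a lower bound on the optimal value of (P) restricted to feasible X with trace(X) ≤ M_b. -/

import Mathlib

set_option autoImplicit false

open Matrix Finset Filter
open scoped RealInnerProductSpace

noncomputable section

/-- The trace inner product `⟨X, Y⟩ = trace (Xᵀ * Y)` on real `n × n` matrices. -/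
def mInner {n : ℕ} (X Y : Matrix (Fin n) (Fin n) ℝ) : ℝ := (Xᵀ * Y).trace

/-- The Frobenius norm induced by the trace inner product. -/
def mNorm {n : ℕ} (X : Matrix (Fin n) (Fin n) ℝ) : ℝ := Real.sqrt (mInner X X)

/-- `ℝ^m` with the Euclidean inner product. -/
abbrev Vec (m : ℕ) := EuclideanSpace ℝ (Fin m)

lemma mInner_comm {n : ℕ} (X Y : Matrix (Fin n) (Fin n) ℝ) : mInner X Y = mInner Y X := by
  unfold mInner
  rw [← Matrix.trace_transpose, Matrix.transpose_mul, Matrix.transpose_transpose]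

lemma psd_trace_nonneg {n : ℕ} {P : Matrix (Fin n) (Fin n) ℝ} (hP : P.PosSemidef) :
    0 ≤ P.trace := by
  rw [Matrix.trace]
  exact Finset.sum_nonneg fun i _ => by simpa using hP.dotProduct_mulVec_nonneg (Pi.single i 1)

lemma mInner_nonneg {n : ℕ} {M X : Matrix (Fin n) (Fin n) ℝ}
    (hM : M.PosSemidef) (hX : X.PosSemidef) : 0 ≤ mInner M X := by
  obtain ⟨B, rfl⟩ : ∃ B : Matrix (Fin n) (Fin n) ℝ, X = Bᴴ * B := by
    open scoped MatrixOrder in exact CStarAlgebra.nonneg_iff_eq_star_mul_self.mp hX.nonneg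
  unfold mInner
  have hMt : Mᵀ = M := by
    rw [← Matrix.conjTranspose_eq_transpose_of_trivial]; exact hM.1
  rw [hMt, ← Matrix.mul_assoc, Matrix.trace_mul_comm]
  exact psd_trace_nonneg (by simpa [Matrix.mul_assoc] using hM.mul_mul_conjTranspose_same B)

lemma shifted_psd {n : ℕ} {M : Matrix (Fin n) (Fin n) ℝ} (hM : M.IsHermitian)
    {l : ℝ} (hl : ∀ i, l ≤ hM.eigenvalues i) : (M - l • 1).PosSemidef := by
  set U : Matrix (Fin n) (Fin n) ℝ := (Matrix.IsHermitian.eigenvectorUnitary hM : Matrix (Fin n) (Fin n) ℝ)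
  have hU : U * star U = 1 := Matrix.mem_unitaryGroup_iff.mp (Matrix.IsHermitian.eigenvectorUnitary hM).2
  have hdiag : (Matrix.diagonal (fun i => hM.eigenvalues i - l) : Matrix (Fin n) (Fin n) ℝ)
      = Matrix.diagonal (RCLike.ofReal ∘ hM.eigenvalues) - l • 1 := by
    ext i j
    by_cases h : i = j <;> simp [Matrix.diagonal, h, Matrix.one_apply]
  have key : M - l • 1 = U * Matrix.diagonal (fun i => hM.eigenvalues i - l) * star U := by
    rw [hdiag, Matrix.mul_sub, Matrix.sub_mul, Matrix.mul_smul, Matrix.smul_mul,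
      Matrix.mul_one, hU]
    conv_lhs => rw [hM.spectral_theorem, Unitary.conjStarAlgAut_apply]
  rw [key]
  have hd : (Matrix.diagonal (fun i => hM.eigenvalues i - l) : Matrix (Fin n) (Fin n) ℝ).PosSemidef :=
    Matrix.posSemidef_diagonal_iff.mpr fun i => sub_nonneg.mpr (hl i)
  simpa [Matrix.star_eq_conjTranspose] using hd.mul_mul_conjTranspose_same U

/-- the suboptimality certificate — for any feasible `X` with `trace X ≤ M_b`
and any `y`, `⟨b, y⟩ + M_b λ_min(C − A*y)` is a lower bound on `⟨C, X⟩`. -/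
theorem suboptimality_lower_bound {n m : ℕ}
    (A : Matrix (Fin n) (Fin n) ℝ →ₗ[ℝ] Vec m)
    (Aadj : Vec m →ₗ[ℝ] Matrix (Fin n) (Fin n) ℝ)
    (hadj : ∀ (X : Matrix (Fin n) (Fin n) ℝ) (ξ : Vec m), ⟪A X, ξ⟫ = mInner X (Aadj ξ))
    (b : Vec m) (C : Matrix (Fin n) (Fin n) ℝ) (hC : C.IsSymm)
    (X : Matrix (Fin n) (Fin n) ℝ) (hX : X.PosSemidef) (hAX : A X = b)
    (Mb : ℝ) (hMb : 0 < Mb) (htr : X.trace ≤ Mb)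
    (y : Vec m) (hHerm : (C - Aadj y).IsHermitian)
    -- `l` is the smallest eigenvalue of `C − A*y`, assumed nonpositive
    (l : ℝ) (hlmem : ∃ i, hHerm.eigenvalues i = l)
    (hlmin : ∀ i, l ≤ hHerm.eigenvalues i) (hl0 : l ≤ 0) :
    mInner C X ≥ ⟪b, y⟫ + Mb * l := by
  have hb : ⟪b, y⟫ = mInner X (Aadj y) := by rw [← hAX]; exact hadj X y
  have hsplit : mInner (C - Aadj y) X = mInner C X - mInner X (Aadj y) := by
    rw [show mInner X (Aadj y) = mInner (Aadj y) X from mInner_comm _ _]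
    unfold mInner
    rw [Matrix.transpose_sub, Matrix.sub_mul, Matrix.trace_sub]
  have hshift : mInner (C - Aadj y - l • 1) X = mInner (C - Aadj y) X - l * X.trace := by
    unfold mInner
    rw [Matrix.transpose_sub, Matrix.sub_mul, Matrix.trace_sub, Matrix.transpose_smul,
      Matrix.transpose_one, Matrix.smul_mul, Matrix.one_mul, Matrix.trace_smul]
    simp [smul_eq_mul]
  have hpos := mInner_nonneg (shifted_psd hHerm hlmin) hX
  have hlm : l * Mb ≤ l * X.trace := mul_le_mul_of_nonpos_left htr hl0
  linarith
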